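/- (Scale-step lemma for Lipschitz curves) For every n ≥ 2 there is a constant C_n depending only on n such that the following holds. Let 0 < δ ≤ 1/2 and W > 0. For j = 1, ..., n and a = 1, ..., N_j, let g_{j,a} : ℝ → ℝ^{n-1} be a Lipschitz function with Lipschitz constant at most δ, and let γ_{j,a} ⊂ ℝ^n be its graph over the x_j-axis, i.e. γ_{j,a} = { x ∈ ℝ^n : (x_1, ..., x_{j-1}, x_{j+1}, ..., x_n) = g_{j,a}(x_j) }. Let T_{j,a,W} be the characteristic function of the W-neighborhood of γ_{j,a} and set f_{j,W} = Σ_{a=1}^{N_j} T_{j,a,W}. If S ≥ δ^{-1} W and Q_S is any axis-parallel cube of side length S, then ∫_{Q_S} ∏_{j=1}^n f_{j,W}^{1/(n-1)} ≤ C_n δ^n ∫_{Q_S} ∏_{j=1}^n f_{j,δ^{-1}W}^{1/(n-1)}. -/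

import Mathlib

open MeasureTheory Finset
open scoped ENNReal

noncomputable section

/-- The line in `ℝⁿ` through `p` with direction `v`. -/
def line {n : ℕ} (p v : EuclideanSpace ℝ (Fin n)) : Set (EuclideanSpace ℝ (Fin n)) :=
  {x | ∃ t : ℝ, x = p + t • v}

/-- `ℝ≥0∞`-valued characteristic function of the `W`-neighborhood of the set `A`:
the indicator of `{x : dist(x, A) ≤ W}`. -/
def tubeFn {n : ℕ} (A : Set (EuclideanSpace ℝ (Fin n))) (W : ℝ)
    (x : EuclideanSpace ℝ (Fin n)) : ℝ≥0∞ :=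
  Set.indicator {y | Metric.infDist y A ≤ W} 1 x

/-- Axis-parallel cube with corner `c` and side length `S`. -/
def cube {n : ℕ} (c : EuclideanSpace ℝ (Fin n)) (S : ℝ) : Set (EuclideanSpace ℝ (Fin n)) :=
  {x | ∀ i, x i ∈ Set.Icc (c i) (c i + S)}

/-- The projection `ℝⁿ → ℝ^{n-1}` forgetting the `j`-th coordinate. -/
def proj {n : ℕ} (j : Fin n) (x : EuclideanSpace ℝ (Fin n)) :
    EuclideanSpace ℝ (Fin (n - 1)) :=
  WithLp.toLp 2 (fun i => if (i : ℕ) < (j : ℕ) then x ⟨i, by omega⟩ else x ⟨i + 1, by omega⟩)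

/-- The graph of `g : ℝ → ℝ^{n-1}` over the `x_j`-axis. -/
def lipGraph {n : ℕ} (j : Fin n) (g : ℝ → EuclideanSpace ℝ (Fin (n - 1))) :
    Set (EuclideanSpace ℝ (Fin n)) :=
  {x | proj j x = g (x j)}

namespace SSL
open Function

variable {m : ℕ}

theorem proj_apply (j : Fin (m + 1)) (x : EuclideanSpace ℝ (Fin (m + 1))) (k : Fin m) :
    proj j x k = x (j.succAbove k) := by
  show (if (k : ℕ) < (j : ℕ) then x ⟨k, by omega⟩ else x ⟨k + 1, by omega⟩) = x (j.succAbove k)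
  rw [Fin.succAbove]
  by_cases h : (k : ℕ) < (j : ℕ)
  · rw [if_pos h, if_pos]
    · rfl
    · simpa [Fin.lt_def] using h
  · rw [if_neg h, if_neg]
    · rfl
    · simpa [Fin.lt_def] using h

def projm (j : Fin (m + 1)) (x : EuclideanSpace ℝ (Fin (m + 1))) :
    EuclideanSpace ℝ (Fin m) := proj j x

theorem projm_apply (j : Fin (m + 1)) (x : EuclideanSpace ℝ (Fin (m + 1))) (k : Fin m) :
    projm j x k = x (j.succAbove k) := proj_apply j x k

theorem normE {N : ℕ} (x : EuclideanSpace ℝ (Fin N)) :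
    ‖x‖ = Real.sqrt (∑ i, (x i) ^ 2) := by
  rw [EuclideanSpace.norm_eq]
  congr 1
  exact Finset.sum_congr rfl fun i _ => by rw [Real.norm_eq_abs, sq_abs]

theorem projm_sub (j : Fin (m + 1)) (x y : EuclideanSpace ℝ (Fin (m + 1))) :
    projm j (x - y) = projm j x - projm j y := by
  ext k
  simp only [projm_apply, PiLp.sub_apply]

theorem norm_projm_sub_le (j : Fin (m + 1)) (x y : EuclideanSpace ℝ (Fin (m + 1))) :
    ‖projm j x - projm j y‖ ≤ dist x y := by
  rw [dist_eq_norm, ← projm_sub, normE, normE]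
  apply Real.sqrt_le_sqrt
  calc ∑ k, (projm j (x - y) k) ^ 2 = ∑ k, ((x - y) (j.succAbove k)) ^ 2 := by
        exact Finset.sum_congr rfl fun k _ => by rw [projm_apply]
    _ ≤ ((x - y) j) ^ 2 + ∑ k, ((x - y) (j.succAbove k)) ^ 2 := le_add_of_nonneg_left (sq_nonneg _)
    _ = ∑ i, ((x - y) i) ^ 2 := (Fin.sum_univ_succAbove (fun i => ((x - y) i) ^ 2) j).symm

theorem abs_coord_sub_le (j : Fin (m + 1)) (x y : EuclideanSpace ℝ (Fin (m + 1))) :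
    |x j - y j| ≤ dist x y := by
  rw [dist_eq_norm, normE, ← Real.sqrt_sq_eq_abs]
  apply Real.sqrt_le_sqrt
  have : (x j - y j) ^ 2 = ((x - y) j) ^ 2 := by simp [PiLp.sub_apply]
  rw [this]
  exact Finset.single_le_sum (fun i _ => sq_nonneg ((x - y) i)) (Finset.mem_univ j)

theorem dist_le_of_coord_eq {j : Fin (m + 1)} {x y : EuclideanSpace ℝ (Fin (m + 1))}
    (h : x j = y j) : dist x y ≤ ‖projm j x - projm j y‖ := by
  rw [dist_eq_norm, ← projm_sub, normE, normE]
  apply Real.sqrt_le_sqrt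
  rw [Fin.sum_univ_succAbove (fun i => ((x - y) i) ^ 2) j]
  have h0 : ((x - y) j) ^ 2 = 0 := by simp [PiLp.sub_apply, h]
  rw [h0, zero_add]
  exact le_of_eq (Finset.sum_congr rfl fun k _ => by rw [projm_apply])

theorem norm_projm_sub_le_of_coords {j : Fin (m + 1)} {x y : EuclideanSpace ℝ (Fin (m + 1))}
    {r : ℝ} (hr : 0 ≤ r) (h : ∀ i, |x i - y i| ≤ r) :
    ‖projm j x - projm j y‖ ≤ Real.sqrt m * r := by
  rw [← projm_sub, normE]
  calc Real.sqrt (∑ k, (projm j (x - y) k) ^ 2) ≤ Real.sqrt (∑ _k : Fin m, r ^ 2) := by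
        apply Real.sqrt_le_sqrt
        refine Finset.sum_le_sum fun k _ => ?_
        rw [projm_apply, ← sq_abs]
        have := h (j.succAbove k)
        have : |(x - y) (j.succAbove k)| ≤ r := by
          simpa [PiLp.sub_apply] using this
        exact pow_le_pow_left₀ (abs_nonneg _) this 2
    _ = Real.sqrt m * r := by
        rw [Finset.sum_const, Finset.card_univ, Fintype.card_fin, nsmul_eq_mul,
          Real.sqrt_mul (by positivity), Real.sqrt_sq hr]

/-- The index of `i ≠ j` in `Fin m` after deleting `j`. -/
def K (j : Fin (m + 1)) (hm : 1 ≤ m) (i : Fin (m + 1)) : Fin m :=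
  ⟨if (i : ℕ) < (j : ℕ) then i else i - 1, by
    rcases Nat.lt_or_ge (i : ℕ) (j : ℕ) with h | h
    · simp only [if_pos h]; omega
    · simp only [if_neg (Nat.not_lt.mpr h)]; omega⟩

theorem val_succAbove (j : Fin (m + 1)) (k : Fin m) :
    ((j.succAbove k : Fin (m + 1)) : ℕ) = if (k : ℕ) < (j : ℕ) then (k : ℕ) else (k : ℕ) + 1 := by
  rw [Fin.succAbove]
  by_cases h : (k : ℕ) < (j : ℕ)
  · rw [if_pos (by rw [Fin.lt_def]; exact h), if_pos h]
    rfl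
  · rw [if_neg (by rw [Fin.lt_def]; exact h), if_neg h]
    rfl

theorem val_K (j : Fin (m + 1)) (hm : 1 ≤ m) (i : Fin (m + 1)) :
    (K j hm i : ℕ) = if (i : ℕ) < (j : ℕ) then (i : ℕ) else (i : ℕ) - 1 := rfl

theorem K_succAbove (j : Fin (m + 1)) (hm : 1 ≤ m) (k : Fin m) :
    K j hm (j.succAbove k) = k := by
  apply Fin.ext
  rw [val_K, val_succAbove]
  have := k.isLt
  have := j.isLt
  split_ifs <;> omega

theorem succAbove_K {j i : Fin (m + 1)} (hm : 1 ≤ m) (hij : i ≠ j) :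
    j.succAbove (K j hm i) = i := by
  apply Fin.ext
  rw [val_succAbove, val_K]
  have hij' : (i : ℕ) ≠ (j : ℕ) := fun h => hij (Fin.ext h)
  have := i.isLt
  have := j.isLt
  split_ifs <;> omega

/-- Insert value `t` at coordinate `j` and `z` elsewhere. -/
def emb (j : Fin (m + 1)) (hm : 1 ≤ m) (t : ℝ) (z : EuclideanSpace ℝ (Fin m)) :
    EuclideanSpace ℝ (Fin (m + 1)) :=
  WithLp.toLp 2 (fun i => if i = j then t else z (K j hm i))

theorem emb_coord (j : Fin (m + 1)) (hm : 1 ≤ m) (t : ℝ) (z : EuclideanSpace ℝ (Fin m)) :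
    emb j hm t z j = t := if_pos rfl

theorem projm_emb (j : Fin (m + 1)) (hm : 1 ≤ m) (t : ℝ) (z : EuclideanSpace ℝ (Fin m)) :
    projm j (emb j hm t z) = z := by
  ext k
  rw [projm_apply]
  show emb j hm t z (j.succAbove k) = z k
  show (if j.succAbove k = j then t else z (K j hm (j.succAbove k))) = z k
  rw [if_neg (Fin.succAbove_ne j k), K_succAbove]

theorem mem_lipGraph_emb (j : Fin (m + 1)) (hm : 1 ≤ m)
    (g : ℝ → EuclideanSpace ℝ (Fin m)) (t : ℝ) :
    (emb j hm t (g t) : EuclideanSpace ℝ (Fin (m + 1))) ∈ lipGraph j g := by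
  have h1 : projm j (emb j hm t (g t)) = g t := projm_emb j hm t (g t)
  have h2 : emb j hm t (g t) j = t := emb_coord j hm t (g t)
  show proj j (emb j hm t (g t)) = g (emb j hm t (g t) j)
  rw [h2]
  exact h1

theorem lipGraph_nonempty (j : Fin (m + 1)) (hm : 1 ≤ m)
    (g : ℝ → EuclideanSpace ℝ (Fin m)) : (lipGraph j g).Nonempty :=
  ⟨_, mem_lipGraph_emb j hm g 0⟩

theorem infDist_le_G (j : Fin (m + 1)) (hm : 1 ≤ m)
    (g : ℝ → EuclideanSpace ℝ (Fin m)) (x : EuclideanSpace ℝ (Fin (m + 1))) :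
    Metric.infDist x (lipGraph j g) ≤ ‖projm j x - g (x j)‖ := by
  have hy : emb j hm (x j) (g (x j)) ∈ lipGraph j g := mem_lipGraph_emb j hm g (x j)
  calc Metric.infDist x (lipGraph j g) ≤ dist x (emb j hm (x j) (g (x j))) :=
        Metric.infDist_le_dist_of_mem hy
    _ ≤ ‖projm j x - projm j (emb j hm (x j) (g (x j)))‖ :=
        dist_le_of_coord_eq (by rw [emb_coord])
    _ = ‖projm j x - g (x j)‖ := by rw [projm_emb]

theorem G_le_of_infDist {j : Fin (m + 1)} (hm : 1 ≤ m)
    {g : ℝ → EuclideanSpace ℝ (Fin m)} {δ W : ℝ} (hδ₀ : 0 < δ) (hδ₁ : δ ≤ 1) (hW : 0 ≤ W)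
    (hg : ∀ s t : ℝ, ‖g s - g t‖ ≤ δ * |s - t|)
    {x : EuclideanSpace ℝ (Fin (m + 1))}
    (h : Metric.infDist x (lipGraph j g) ≤ W) :
    ‖projm j x - g (x j)‖ ≤ (1 + δ) * W := by
  refine le_of_forall_pos_le_add fun ε hε => ?_
  have hlt : Metric.infDist x (lipGraph j g) < W + ε / 2 := lt_of_le_of_lt h (by linarith)
  rw [Metric.infDist_lt_iff (lipGraph_nonempty j hm g)] at hlt
  obtain ⟨y, hy, hxy⟩ := hlt
  have hyg : projm j y = g (y j) := hy
  calc ‖projm j x - g (x j)‖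
      ≤ ‖projm j x - projm j y‖ + ‖projm j y - g (x j)‖ := norm_sub_le_norm_sub_add_norm_sub _ _ _
    _ ≤ dist x y + ‖g (y j) - g (x j)‖ :=
        add_le_add (norm_projm_sub_le j x y) (le_of_eq (by rw [hyg]))
    _ ≤ dist x y + δ * |y j - x j| := by gcongr; exact hg _ _
    _ ≤ dist x y + δ * dist x y := by
        gcongr
        rw [abs_sub_comm]
        exact abs_coord_sub_le j x y
    _ = (1 + δ) * dist x y := by ring
    _ ≤ (1 + δ) * (W + ε / 2) := by gcongr
    _ ≤ (1 + δ) * W + ε := by nlinarith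

theorem measurable_tubeFn {n : ℕ} (A : Set (EuclideanSpace ℝ (Fin n))) (W : ℝ) :
    Measurable (tubeFn A W) := by
  apply Measurable.indicator measurable_const
  exact (isClosed_le (Metric.continuous_infDist_pt A) continuous_const).measurableSet

theorem tubeFn_le_one {n : ℕ} (A : Set (EuclideanSpace ℝ (Fin n))) (W : ℝ) (x) :
    tubeFn A W x ≤ 1 := by
  unfold tubeFn
  by_cases h : x ∈ {y | Metric.infDist y A ≤ W}
  · rw [Set.indicator_of_mem h]; rfl
  · rw [Set.indicator_of_notMem h]; exact zero_le

theorem tubeFn_eq_one {n : ℕ} {A : Set (EuclideanSpace ℝ (Fin n))} {W : ℝ} {x}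
    (h : Metric.infDist x A ≤ W) : tubeFn A W x = 1 := by
  unfold tubeFn
  have hx : x ∈ {y | Metric.infDist y A ≤ W} := h
  rw [Set.indicator_of_mem hx, Pi.one_apply]

theorem tubeFn_eq_zero {n : ℕ} {A : Set (EuclideanSpace ℝ (Fin n))} {W : ℝ} {x}
    (h : ¬ Metric.infDist x A ≤ W) : tubeFn A W x = 0 := by
  have hx : x ∉ {y | Metric.infDist y A ≤ W} := h
  unfold tubeFn
  rw [Set.indicator_of_notMem hx]

theorem pi_restrict {k : ℕ} {s : Fin k → Set ℝ} (hs : ∀ i, MeasurableSet (s i)) :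
    Measure.pi (fun i => (volume : Measure ℝ).restrict (s i))
      = (volume : Measure (Fin k → ℝ)).restrict (Set.pi Set.univ s) := by
  refine Measure.pi_eq fun A hA => ?_
  rw [Measure.restrict_apply (MeasurableSet.univ_pi hA), ← Set.pi_inter_distrib,
    volume_pi, Measure.pi_pi]
  exact Finset.prod_congr rfl fun i _ => (Measure.restrict_apply (hA i)).symm

theorem abs_coord_le_norm {N : ℕ} (v : EuclideanSpace ℝ (Fin N)) (k : Fin N) :
    |v k| ≤ ‖v‖ := by
  rw [EuclideanSpace.norm_eq, ← Real.sqrt_sq_eq_abs]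
  apply Real.sqrt_le_sqrt
  calc (v k) ^ 2 = ‖v k‖ ^ 2 := by rw [Real.norm_eq_abs, sq_abs]
    _ ≤ ∑ i, ‖v i‖ ^ 2 :=
        Finset.single_le_sum (f := fun i => ‖v i‖ ^ 2) (fun i _ => sq_nonneg _)
          (Finset.mem_univ k)


section LW
variable {ι : Type*} [Fintype ι] [DecidableEq ι] {A : ι → Type*} [∀ i, MeasurableSpace (A i)]
  (μ : ∀ i, Measure (A i)) [∀ i, SigmaFinite (μ i)]

theorem updateFinset_update {x : ∀ i, A i} {s : Finset ι} {i : ι} (hi : i ∉ s)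
    (y : ∀ k : s, A k) (t : A i) :
    updateFinset (Function.update x i t) s y = Function.update (updateFinset x s y) i t := by
  funext k
  simp only [updateFinset, Function.update]
  by_cases hk : k ∈ s
  · have : k ≠ i := fun h => hi (h ▸ hk)
    simp [hk, this]
  · simp [hk]

theorem lmarginal_update_of_indep {f : (∀ i, A i) → ℝ≥0∞} {i : ι}
    (hf : ∀ x t, f (Function.update x i t) = f x) {s : Finset ι} (hi : i ∉ s)
    (x : ∀ i, A i) (t : A i) :
    (∫⋯∫⁻_s, f ∂μ) (Function.update x i t) = (∫⋯∫⁻_s, f ∂μ) x := by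
  simp only [lmarginal]
  congr 1
  funext y
  rw [updateFinset_update hi, hf]

/-- Loomis–Whitney inequality, marginal form. -/
theorem loomis_whitney {p : ℝ} (hp₀ : 0 ≤ p)
    (hp : ((Fintype.card ι : ℝ) - 1) * p = 1)
    (g : ι → (∀ i, A i) → ℝ≥0∞) (hgm : ∀ j, Measurable (g j))
    (hgi : ∀ j x t, g j (Function.update x j t) = g j x) (s : Finset ι) (x : ∀ i, A i) :
    (∫⋯∫⁻_s, (fun y => ∏ j, (g j y) ^ p) ∂μ) x ≤ ∏ j, ((∫⋯∫⁻_(s \ {j}), g j ∂μ) x) ^ p := by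
  induction s using Finset.induction generalizing x with
  | empty => simp
  | @insert i s his ih =>
    have hFm : Measurable fun y => ∏ j, (g j y) ^ p :=
      Finset.measurable_prod _ fun j _ => (hgm j).pow_const _
    rw [lmarginal_insert _ hFm his]
    calc ∫⁻ t, (∫⋯∫⁻_s, (fun y => ∏ j, g j y ^ p) ∂μ) (Function.update x i t) ∂μ i
        ≤ ∫⁻ t, ∏ j, ((∫⋯∫⁻_(s \ {j}), g j ∂μ) (Function.update x i t)) ^ p ∂μ i := by
          exact lintegral_mono fun t => ih _
      _ = ∫⁻ t, ((∫⋯∫⁻_s, g i ∂μ) x) ^ p *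
            ∏ j ∈ Finset.univ.erase i,
              ((∫⋯∫⁻_(s \ {j}), g j ∂μ) (Function.update x i t)) ^ p ∂μ i := by
          congr 1; funext t
          rw [← Finset.mul_prod_erase Finset.univ _ (Finset.mem_univ i)]
          congr 2
          rw [Finset.sdiff_singleton_eq_erase, Finset.erase_eq_of_notMem his,
            lmarginal_update_of_indep μ (hgi i) his]
      _ = ((∫⋯∫⁻_s, g i ∂μ) x) ^ p *
            ∫⁻ t, ∏ j ∈ Finset.univ.erase i,
              ((∫⋯∫⁻_(s \ {j}), g j ∂μ) (Function.update x i t)) ^ p ∂μ i := by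
          rw [lintegral_const_mul]
          exact Finset.measurable_prod _ fun j _ =>
            (((hgm j).lmarginal μ).comp (measurable_update x)).pow_const _
      _ ≤ ((∫⋯∫⁻_s, g i ∂μ) x) ^ p *
            ∏ j ∈ Finset.univ.erase i,
              (∫⁻ t, (∫⋯∫⁻_(s \ {j}), g j ∂μ) (Function.update x i t) ∂μ i) ^ p := by
          gcongr
          refine ENNReal.lintegral_prod_norm_pow_le _ (fun j _ => ?_) ?_ (fun j _ => hp₀)
          · exact (((hgm j).lmarginal μ).comp (measurable_update x)).aemeasurable
          · rw [Finset.sum_const, Finset.card_erase_of_mem (Finset.mem_univ i),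
              Finset.card_univ, nsmul_eq_mul]
            rw [← hp]
            have h1 : 1 ≤ Fintype.card ι := Fintype.card_pos_iff.mpr ⟨i⟩
            push_cast [Nat.cast_sub h1]
            ring
      _ = ∏ j, ((∫⋯∫⁻_(insert i s \ {j}), g j ∂μ) x) ^ p := by
          rw [← Finset.mul_prod_erase Finset.univ _ (Finset.mem_univ i)]
          congr 1
          · congr 2
            rw [Finset.sdiff_singleton_eq_erase, Finset.erase_insert his]
          · refine Finset.prod_congr rfl fun j hj => ?_
            have hij : j ≠ i := (Finset.mem_erase.mp hj).1
            have hins : i ∉ s \ {j} := fun h => his (Finset.mem_sdiff.mp h).1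
            rw [← lmarginal_insert _ (hgm j) hins]
            congr 2
            ext k
            simp only [Finset.mem_insert, Finset.mem_sdiff, Finset.mem_singleton]
            constructor
            · rintro (rfl | ⟨hk, hk2⟩)
              · exact ⟨Or.inl rfl, hij.symm⟩
              · exact ⟨Or.inr hk, hk2⟩
            · rintro ⟨rfl | hk, hk2⟩
              · exact Or.inl rfl
              · exact Or.inr ⟨hk, hk2⟩

theorem lmarginal_coord_prod (φ : ∀ i, A i → ℝ≥0∞) (hφ : ∀ i, Measurable (φ i))
    (s : Finset ι) (x : ∀ i, A i) :
    (∫⋯∫⁻_s, (fun y => ∏ i ∈ s, φ i (y i)) ∂μ) x = ∏ i ∈ s, ∫⁻ t, φ i t ∂μ i := by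
  induction s using Finset.induction generalizing x with
  | empty => simp
  | @insert i s his ih =>
    have hFm : Measurable fun y : ∀ i, A i => ∏ k ∈ insert i s, φ k (y k) :=
      Finset.measurable_prod _ fun k _ => (hφ k).comp (measurable_pi_apply k)
    have hGm : Measurable fun y : ∀ i, A i => ∏ k ∈ s, φ k (y k) :=
      Finset.measurable_prod _ fun k _ => (hφ k).comp (measurable_pi_apply k)
    have step : ∀ z : ∀ i, A i,
        (∫⋯∫⁻_s, (fun y => ∏ k ∈ insert i s, φ k (y k)) ∂μ) z
          = φ i (z i) * (∫⋯∫⁻_s, (fun y => ∏ k ∈ s, φ k (y k)) ∂μ) z := by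
      intro z
      simp only [lmarginal]
      rw [← lintegral_const_mul]
      · congr 1
        funext y
        rw [Finset.prod_insert his]
        congr 2
        simp [updateFinset, his]
      · exact hGm.comp measurable_updateFinset
    rw [lmarginal_insert _ hFm his]
    simp_rw [step, Function.update_self, ih]
    rw [lintegral_mul_const _ (hφ i), Finset.prod_insert his]

end LW

end SSL

namespace SSL

set_option maxHeartbeats 1000000 in
theorem box_step {m : ℕ} (hm : 1 ≤ m) {δ W ℓ : ℝ} (hδ₀ : 0 < δ) (hδ₁ : δ ≤ 1/2) (hW : 0 < W)
    (hℓ₀ : 0 < ℓ)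
    (hℓL : 8 * Real.sqrt ((m+1 : ℕ) : ℝ) * ℓ ≤ δ⁻¹ * W)
    (hℓ2 : δ⁻¹ * W ≤ 16 * Real.sqrt ((m+1 : ℕ) : ℝ) * ℓ)
    (N : Fin (m+1) → ℕ) (g : (j : Fin (m+1)) → Fin (N j) → ℝ → EuclideanSpace ℝ (Fin m))
    (hg : ∀ j a (s t : ℝ), ‖g j a s - g j a t‖ ≤ δ * |s - t|)
    (u : Fin (m+1) → ℝ) :
    ∫⁻ x in {x : EuclideanSpace ℝ (Fin (m+1)) | ∀ i, x i ∈ Set.Ico (u i) (u i + ℓ)},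
        ∏ j, (∑ a, tubeFn (lipGraph j (g j a)) W x) ^ ((1:ℝ)/(((m+1:ℕ) : ℝ) - 1))
      ≤ ENNReal.ofReal ((64 * Real.sqrt ((m+1 : ℕ) : ℝ))^(m+1) * δ^(m+1)) *
        ∫⁻ x in {x : EuclideanSpace ℝ (Fin (m+1)) | ∀ i, x i ∈ Set.Ico (u i) (u i + ℓ)},
          ∏ j, (∑ a, tubeFn (lipGraph j (g j a)) (δ⁻¹ * W) x) ^ ((1:ℝ)/(((m+1:ℕ) : ℝ) - 1)) := by
  classical
  set s : ℝ := Real.sqrt ((m+1 : ℕ) : ℝ) with hs_def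
  have hs1 : (1:ℝ) ≤ s := by
    rw [hs_def, show (1:ℝ) = Real.sqrt 1 by simp]
    apply Real.sqrt_le_sqrt
    push_cast; linarith
  have hsm : Real.sqrt (m : ℝ) ≤ s := by
    apply Real.sqrt_le_sqrt; push_cast; linarith
  have hδi : 2 ≤ δ⁻¹ := by
    rw [show (2:ℝ) = (2⁻¹)⁻¹ by norm_num]
    gcongr
    · linarith
  have hmR : ((m+1:ℕ) : ℝ) - 1 = (m : ℝ) := by push_cast; ring
  set p : ℝ := (1:ℝ)/(((m+1:ℕ) : ℝ) - 1) with hp_def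
  have hmne : (m:ℝ) ≠ 0 := by
    have : (0:ℝ) < m := by exact_mod_cast hm
    linarith
  have hp₀ : 0 ≤ p := by
    rw [hp_def, hmR]
    positivity
  have hpm : (m:ℝ) * p = 1 := by
    rw [hp_def, hmR]
    field_simp
  -- the one-dimensional pieces
  set I : Fin (m+1) → Set ℝ := fun i => Set.Ico (u i) (u i + ℓ) with hI_def
  set μ : Fin (m+1) → Measure ℝ := fun i => (volume : Measure ℝ).restrict (I i) with hμ_def
  haveI : ∀ i, SigmaFinite (μ i) := fun i => by rw [hμ_def]; infer_instance
  set Box : Set (EuclideanSpace ℝ (Fin (m+1))) := {x | ∀ i, x i ∈ I i} with hBox_def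
  set piBox : Set (Fin (m+1) → ℝ) := Set.pi Set.univ I with hpiBox_def
  have hIm : ∀ i, MeasurableSet (I i) := fun i => measurableSet_Ico
  have hpiBoxMeas : MeasurableSet piBox := MeasurableSet.univ_pi hIm
  have hBoxMeas : MeasurableSet Box := by
    have : Box = ⋂ i, (fun x : EuclideanSpace ℝ (Fin (m+1)) => x i) ⁻¹' (I i) := by
      ext x; simp [hBox_def, Set.mem_iInter]
    rw [this]
    exact MeasurableSet.iInter fun i => ((measurable_pi_apply i).comp (WithLp.measurable_ofLp 2 _)) (hIm i)
  have hpiμ : Measure.pi μ = (volume : Measure (Fin (m+1) → ℝ)).restrict piBox :=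
    pi_restrict hIm
  set e := (MeasurableEquiv.toLp 2 (Fin (m+1) → ℝ)).symm with he_def
  have hesymm : ∀ (y : Fin (m+1) → ℝ) (i : Fin (m+1)), e.symm y i = y i := fun y i => rfl
  have hpre : e.symm ⁻¹' Box = piBox := by
    ext y
    simp only [Set.mem_preimage, hBox_def, Set.mem_setOf_eq, hpiBox_def, Set.mem_univ_pi]
    exact Iff.rfl
  have transfer : ∀ F : EuclideanSpace ℝ (Fin (m+1)) → ℝ≥0∞, Measurable F →
      ∫⁻ x in Box, F x = ∫⁻ y, F (e.symm y) ∂(Measure.pi μ) := by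
    intro F hF
    have h1 : (volume : Measure (EuclideanSpace ℝ (Fin (m+1))))
        = Measure.map e.symm (volume : Measure (Fin (m+1) → ℝ)) :=
      ((EuclideanSpace.volume_preserving_symm_measurableEquiv_toLp (Fin (m+1))).symm).map_eq.symm
    rw [h1, setLIntegral_map hBoxMeas hF (MeasurableEquiv.measurable _), hpre, hpiμ]
  have haeBox : ∀ᵐ y ∂(Measure.pi μ), y ∈ piBox := by
    rw [hpiμ]; exact ae_restrict_mem hpiBoxMeas
  -- measurability of the two integrands
  have hmeasF : ∀ W' : ℝ, Measurable fun x : EuclideanSpace ℝ (Fin (m+1)) =>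
      ∏ j, (∑ a, tubeFn (lipGraph j (g j a)) W' x) ^ p := by
    intro W'
    exact Finset.measurable_prod _ fun j _ =>
      (Finset.measurable_sum _ fun a _ => measurable_tubeFn _ _).pow_const _
  -- the families of "active" tubes
  set A : (j : Fin (m+1)) → Finset (Fin (N j)) := fun j =>
    Finset.univ.filter (fun a => ∃ x : EuclideanSpace ℝ (Fin (m+1)),
      (∀ i, x i ∈ I i) ∧ ‖projm j x - g j a (x j)‖ ≤ (1+δ)*W) with hA_def
  -- arithmetic facts
  have arith1 : Real.sqrt m * ℓ + (1+δ)*W + δ*ℓ ≤ δ⁻¹*W := by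
    have h1 : Real.sqrt m * ℓ ≤ δ⁻¹*W/8 := by nlinarith [mul_le_mul_of_nonneg_right hsm hℓ₀.le]
    have h2 : δ*ℓ ≤ δ⁻¹*W/16 := by nlinarith [mul_le_mul_of_nonneg_right hs1 hℓ₀.le]
    have h3 : (1+δ)*W ≤ (3/4)*(δ⁻¹*W) := by nlinarith [mul_le_mul_of_nonneg_right hδi hW.le]
    linarith
  have arith2 : (1+δ)*W + δ*ℓ ≤ 2*W := by
    have h2 : δ*ℓ ≤ W/8 := by
      have hδδ : δ * δ⁻¹ = 1 := mul_inv_cancel₀ (ne_of_gt hδ₀)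
      nlinarith [mul_le_mul_of_nonneg_left hℓL hδ₀.le, mul_le_mul_of_nonneg_right hs1 hℓ₀.le,
        mul_pos hδ₀ hℓ₀]
    nlinarith
  -- C1 : active tubes at scale δ⁻¹W cover the whole box
  have C1 : ∀ (j : Fin (m+1)) (a : Fin (N j)), a ∈ A j →
      ∀ x : EuclideanSpace ℝ (Fin (m+1)), (∀ i, x i ∈ I i) →
      tubeFn (lipGraph j (g j a)) (δ⁻¹*W) x = 1 := by
    intro j a ha x hx
    obtain ⟨x', hx', hd⟩ := (Finset.mem_filter.mp ha).2
    apply tubeFn_eq_one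
    refine le_trans (infDist_le_G j hm (g j a) x) ?_
    have hcoord : ∀ i, |x i - x' i| ≤ ℓ := by
      intro i
      have h1 := hx i; have h2 := hx' i
      rw [hI_def, Set.mem_Ico] at h1 h2
      rw [abs_le]; constructor <;> [linarith; linarith]
    calc ‖projm j x - g j a (x j)‖
        ≤ ‖projm j x - projm j x'‖ + ‖projm j x' - g j a (x j)‖ :=
          norm_sub_le_norm_sub_add_norm_sub _ _ _
      _ ≤ ‖projm j x - projm j x'‖ + (‖projm j x' - g j a (x' j)‖ + ‖g j a (x' j) - g j a (x j)‖) := by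
          gcongr
          exact norm_sub_le_norm_sub_add_norm_sub _ _ _
      _ ≤ Real.sqrt m * ℓ + ((1+δ)*W + δ*ℓ) := by
          refine add_le_add (norm_projm_sub_le_of_coords hℓ₀.le hcoord) (add_le_add hd ?_)
          calc ‖g j a (x' j) - g j a (x j)‖ ≤ δ * |x' j - x j| := hg j a _ _
            _ ≤ δ * ℓ := by
                have := hcoord j
                rw [abs_sub_comm] at this
                exact mul_le_mul_of_nonneg_left this hδ₀.le
      _ ≤ δ⁻¹ * W := by linarith [arith1]
  -- C2 : tubes at scale W are dominated by coordinate boxes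
  have hφm : ∀ (j : Fin (m+1)) (c : EuclideanSpace ℝ (Fin m)) (i : Fin (m+1)),
      Measurable (fun t : ℝ => if i = j then (1 : ℝ≥0∞) else
        Set.indicator (Set.Icc (c (K j hm i) - 2*W) (c (K j hm i) + 2*W)) 1 t) := by
    intro j c i
    by_cases h : i = j
    · simp only [h, if_pos rfl]; exact measurable_const
    · simp only [if_neg h]; exact measurable_const.indicator measurableSet_Icc
  have hHm : ∀ (j : Fin (m+1)) (c : EuclideanSpace ℝ (Fin m)),
      Measurable (fun y : Fin (m+1) → ℝ => ∏ i ∈ Finset.univ \ {j},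
        (if i = j then (1 : ℝ≥0∞) else
          Set.indicator (Set.Icc (c (K j hm i) - 2*W) (c (K j hm i) + 2*W)) 1 (y i))) := by
    intro j c
    exact Finset.measurable_prod _ fun i _ => (hφm j c i).comp (measurable_pi_apply i)
  have C2 : ∀ (j : Fin (m+1)) (y : Fin (m+1) → ℝ), (∀ i, y i ∈ I i) →
      (∑ a, tubeFn (lipGraph j (g j a)) W (e.symm y)) ≤
      ∑ a ∈ A j, ∏ i ∈ Finset.univ \ {j},
        (if i = j then (1 : ℝ≥0∞) else
          Set.indicator (Set.Icc (g j a (u j) (K j hm i) - 2*W) (g j a (u j) (K j hm i) + 2*W))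
            1 (y i)) := by
    intro j y hy
    have hxy : ∀ i, (e.symm y) i = y i := fun i => rfl
    calc (∑ a, tubeFn (lipGraph j (g j a)) W (e.symm y))
        ≤ ∑ a, (if a ∈ A j then ∏ i ∈ Finset.univ \ {j},
            (if i = j then (1 : ℝ≥0∞) else
              Set.indicator (Set.Icc (g j a (u j) (K j hm i) - 2*W)
                (g j a (u j) (K j hm i) + 2*W)) 1 (y i)) else 0) := by
          apply Finset.sum_le_sum
          intro a _
          by_cases htub : Metric.infDist (e.symm y) (lipGraph j (g j a)) ≤ W
          · have hGbd : ‖projm j (e.symm y) - g j a ((e.symm y) j)‖ ≤ (1+δ)*W :=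
              G_le_of_infDist hm hδ₀ (by linarith) hW.le (hg j a) htub
            have haA : a ∈ A j := by
              rw [hA_def, Finset.mem_filter]
              exact ⟨Finset.mem_univ _, ⟨e.symm y, fun i => by rw [hxy i]; exact hy i, hGbd⟩⟩
            rw [if_pos haA]
            refine le_trans (tubeFn_le_one _ _ _) (le_of_eq (Finset.prod_eq_one ?_).symm)
            intro i hi
            have hij : i ≠ j := by
              rw [Finset.mem_sdiff, Finset.mem_singleton] at hi
              exact hi.2
            rw [if_neg hij]
            have h5 : ‖projm j (e.symm y) - g j a (u j)‖ ≤ 2*W := by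
              calc ‖projm j (e.symm y) - g j a (u j)‖
                  ≤ ‖projm j (e.symm y) - g j a ((e.symm y) j)‖ +
                    ‖g j a ((e.symm y) j) - g j a (u j)‖ :=
                    norm_sub_le_norm_sub_add_norm_sub _ _ _
                _ ≤ (1+δ)*W + δ*ℓ := by
                    gcongr
                    calc ‖g j a ((e.symm y) j) - g j a (u j)‖ ≤ δ * |(e.symm y) j - u j| :=
                        hg j a _ _
                      _ ≤ δ * ℓ := by
                        apply mul_le_mul_of_nonneg_left _ hδ₀.le
                        have := hy j
                        rw [hI_def, Set.mem_Ico] at this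
                        rw [hxy j, abs_le]
                        constructor <;> linarith
                _ ≤ 2*W := arith2
            have h6 : |(projm j (e.symm y) - g j a (u j)) (K j hm i)| ≤ 2*W :=
              le_trans (abs_coord_le_norm _ _) h5
            rw [PiLp.sub_apply] at h6
            have h7 : projm j (e.symm y) (K j hm i) = y i := by
              rw [projm_apply, succAbove_K hm hij]
              exact hxy i
            rw [h7] at h6
            have h8 : y i ∈ Set.Icc (g j a (u j) (K j hm i) - 2*W)
                (g j a (u j) (K j hm i) + 2*W) := by
              rw [Set.mem_Icc]
              have := abs_le.mp h6
              constructor <;> linarith [this.1, this.2]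
            rw [Set.indicator_of_mem h8, Pi.one_apply]
          · rw [tubeFn_eq_zero htub]
            exact zero_le
      _ = ∑ a ∈ A j, ∏ i ∈ Finset.univ \ {j},
            (if i = j then (1 : ℝ≥0∞) else
              Set.indicator (Set.Icc (g j a (u j) (K j hm i) - 2*W)
                (g j a (u j) (K j hm i) + 2*W)) 1 (y i)) := by
          rw [Finset.sum_ite_mem, Finset.univ_inter]
  -- the enveloping functions
  set G : (j : Fin (m+1)) → (Fin (m+1) → ℝ) → ℝ≥0∞ := fun j y => ∑ a ∈ A j,
    ∏ i ∈ Finset.univ \ {j}, (if i = j then (1:ℝ≥0∞) else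
      Set.indicator (Set.Icc (g j a (u j) (K j hm i) - 2*W) (g j a (u j) (K j hm i) + 2*W))
        1 (y i)) with hG_def
  have hGm : ∀ j, Measurable (G j) := fun j =>
    Finset.measurable_sum _ fun a _ => hHm j (g j a (u j))
  have hGi : ∀ j x t, G j (Function.update x j t) = G j x := by
    intro j x t
    simp only [hG_def]
    refine Finset.sum_congr rfl fun a _ => Finset.prod_congr rfl fun i hi => ?_
    have hij : i ≠ j := by rw [Finset.mem_sdiff, Finset.mem_singleton] at hi; exact hi.2
    rw [Function.update_of_ne hij]
  have hcard : ((Fintype.card (Fin (m+1)) : ℝ) - 1) * p = 1 := by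
    rw [Fintype.card_fin, hmR]
    exact hpm
  have hLW := loomis_whitney μ hp₀ hcard G hGm hGi Finset.univ u
  have margbd : ∀ j, (∫⋯∫⁻_(Finset.univ \ {j}), G j ∂μ) u
      ≤ ((A j).card : ℝ≥0∞) * (ENNReal.ofReal (4*W))^m := by
    intro j
    have hsplit : (∫⋯∫⁻_(Finset.univ \ {j}), G j ∂μ) u
        = ∑ a ∈ A j, (∫⋯∫⁻_(Finset.univ \ {j}), (fun y => ∏ i ∈ Finset.univ \ {j},
            (if i = j then (1:ℝ≥0∞) else
              Set.indicator (Set.Icc (g j a (u j) (K j hm i) - 2*W)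
                (g j a (u j) (K j hm i) + 2*W)) 1 (y i))) ∂μ) u := by
      simp only [hG_def, lmarginal]
      exact lintegral_finset_sum _
        (fun a _ => (hHm j (g j a (u j))).comp measurable_updateFinset)
    rw [hsplit]
    have each : ∀ a ∈ A j, (∫⋯∫⁻_(Finset.univ \ {j}), (fun y => ∏ i ∈ Finset.univ \ {j},
        (if i = j then (1:ℝ≥0∞) else
          Set.indicator (Set.Icc (g j a (u j) (K j hm i) - 2*W)
            (g j a (u j) (K j hm i) + 2*W)) 1 (y i))) ∂μ) u
        ≤ (ENNReal.ofReal (4*W))^m := by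
      intro a _
      calc (∫⋯∫⁻_(Finset.univ \ {j}), (fun y => ∏ i ∈ Finset.univ \ {j},
            (if i = j then (1:ℝ≥0∞) else
              Set.indicator (Set.Icc (g j a (u j) (K j hm i) - 2*W)
                (g j a (u j) (K j hm i) + 2*W)) 1 (y i))) ∂μ) u
          = ∏ i ∈ Finset.univ \ {j}, ∫⁻ t, (if i = j then (1:ℝ≥0∞) else
              Set.indicator (Set.Icc (g j a (u j) (K j hm i) - 2*W)
                (g j a (u j) (K j hm i) + 2*W)) 1 t) ∂μ i :=
            lmarginal_coord_prod μ (fun i t => if i = j then (1:ℝ≥0∞) else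
              Set.indicator (Set.Icc (g j a (u j) (K j hm i) - 2*W)
                (g j a (u j) (K j hm i) + 2*W)) 1 t) (hφm j (g j a (u j)))
              (Finset.univ \ {j}) u
        _ ≤ ∏ _i ∈ Finset.univ \ {j}, ENNReal.ofReal (4*W) := by
            apply Finset.prod_le_prod'
            intro i hi
            have hij : i ≠ j := by
              rw [Finset.mem_sdiff, Finset.mem_singleton] at hi; exact hi.2
            simp only [if_neg hij]
            rw [lintegral_indicator_one measurableSet_Icc]
            show (volume : Measure ℝ).restrict (I i) _ ≤ _
            rw [Measure.restrict_apply measurableSet_Icc]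
            refine le_trans (measure_mono Set.inter_subset_left) ?_
            rw [Real.volume_Icc]
            apply ENNReal.ofReal_le_ofReal
            ring_nf
            linarith
        _ = (ENNReal.ofReal (4*W))^m := by
            rw [Finset.prod_const, Finset.card_sdiff_of_subset (Finset.subset_univ {j}),
              Finset.card_univ, Fintype.card_fin, Finset.card_singleton,
              Nat.add_sub_cancel]
    calc ∑ a ∈ A j, (∫⋯∫⁻_(Finset.univ \ {j}), (fun y => ∏ i ∈ Finset.univ \ {j},
          (if i = j then (1:ℝ≥0∞) else
            Set.indicator (Set.Icc (g j a (u j) (K j hm i) - 2*W)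
              (g j a (u j) (K j hm i) + 2*W)) 1 (y i))) ∂μ) u
        ≤ ∑ _a ∈ A j, (ENNReal.ofReal (4*W))^m := Finset.sum_le_sum each
      _ = ((A j).card : ℝ≥0∞) * (ENNReal.ofReal (4*W))^m := by
          rw [Finset.sum_const, nsmul_eq_mul]
  have rhslow : ENNReal.ofReal (ℓ^(m+1)) * ∏ j, ((A j).card : ℝ≥0∞)^p
      ≤ ∫⁻ y, (∏ j, (∑ a, tubeFn (lipGraph j (g j a)) (δ⁻¹*W) (e.symm y)) ^ p)
          ∂(Measure.pi μ) := by
    have hμuniv : Measure.pi μ Set.univ = ENNReal.ofReal (ℓ^(m+1)) := by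
      rw [Measure.pi_univ]
      have hone : ∀ i, μ i Set.univ = ENNReal.ofReal ℓ := by
        intro i
        show (volume : Measure ℝ).restrict (I i) Set.univ = _
        rw [Measure.restrict_apply_univ]
        show volume (Set.Ico (u i) (u i + ℓ)) = _
        rw [Real.volume_Ico]
        congr 1
        ring
      rw [Finset.prod_congr rfl (fun i _ => hone i), Finset.prod_const, Finset.card_univ,
        Fintype.card_fin, ← ENNReal.ofReal_pow hℓ₀.le]
    calc ENNReal.ofReal (ℓ^(m+1)) * ∏ j, ((A j).card : ℝ≥0∞)^p
        = ∫⁻ _y, (∏ j, ((A j).card : ℝ≥0∞)^p) ∂(Measure.pi μ) := by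
          rw [lintegral_const, hμuniv, mul_comm]
      _ ≤ ∫⁻ y, (∏ j, (∑ a, tubeFn (lipGraph j (g j a)) (δ⁻¹*W) (e.symm y)) ^ p)
            ∂(Measure.pi μ) := by
          apply lintegral_mono_ae
          filter_upwards [haeBox] with y hy
          have hy' : ∀ i, y i ∈ I i := by
            rw [hpiBox_def, Set.mem_univ_pi] at hy; exact hy
          apply Finset.prod_le_prod'
          intro j _
          apply ENNReal.rpow_le_rpow _ hp₀
          calc ((A j).card : ℝ≥0∞) = ∑ _a ∈ A j, (1:ℝ≥0∞) := by
                rw [Finset.sum_const, nsmul_eq_mul, mul_one]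
            _ = ∑ a ∈ A j, tubeFn (lipGraph j (g j a)) (δ⁻¹*W) (e.symm y) := by
                refine Finset.sum_congr rfl fun a ha => ?_
                rw [C1 j a ha (e.symm y) (fun i => hy' i)]
            _ ≤ ∑ a, tubeFn (lipGraph j (g j a)) (δ⁻¹*W) (e.symm y) :=
                Finset.sum_le_sum_of_subset (Finset.subset_univ _)
  have c4 : ((ENNReal.ofReal (4*W))^m)^p = ENNReal.ofReal (4*W) := by
    rw [← ENNReal.rpow_natCast (ENNReal.ofReal (4*W)) m, ← ENNReal.rpow_mul, hpm,
      ENNReal.rpow_one]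
  have hr : (ENNReal.ofReal (4*W))^(m+1)
      ≤ ENNReal.ofReal ((64*s)^(m+1) * δ^(m+1)) * ENNReal.ofReal (ℓ^(m+1)) := by
    rw [← ENNReal.ofReal_pow (by positivity), ← ENNReal.ofReal_mul (by positivity)]
    apply ENNReal.ofReal_le_ofReal
    have h4 : 4*W ≤ 64*s*δ*ℓ := by
      have hδδ : δ * δ⁻¹ = 1 := mul_inv_cancel₀ (ne_of_gt hδ₀)
      nlinarith [mul_le_mul_of_nonneg_left hℓ2 hδ₀.le]
    calc (4*W)^(m+1) ≤ (64*s*δ*ℓ)^(m+1) := pow_le_pow_left₀ (by positivity) h4 _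
      _ = (64*s)^(m+1) * δ^(m+1) * ℓ^(m+1) := by rw [← mul_pow, ← mul_pow]
      _ = (64*s)^(m+1) * δ^(m+1) * ℓ^(m+1) := rfl
  have hfin : (∏ j, (((A j).card : ℝ≥0∞) * (ENNReal.ofReal (4*W))^m)^p)
      ≤ ENNReal.ofReal ((64*s)^(m+1) * δ^(m+1)) *
        (ENNReal.ofReal (ℓ^(m+1)) * ∏ j, ((A j).card : ℝ≥0∞)^p) := by
    have hsplit2 : (∏ j, (((A j).card : ℝ≥0∞) * (ENNReal.ofReal (4*W))^m)^p)
        = (∏ j, ((A j).card : ℝ≥0∞)^p) * (ENNReal.ofReal (4*W))^(m+1) := by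
      simp_rw [ENNReal.mul_rpow_of_nonneg _ _ hp₀]
      rw [Finset.prod_mul_distrib, Finset.prod_const, Finset.card_univ, Fintype.card_fin, c4]
    rw [hsplit2]
    calc (∏ j, ((A j).card : ℝ≥0∞)^p) * (ENNReal.ofReal (4*W))^(m+1)
        ≤ (∏ j, ((A j).card : ℝ≥0∞)^p) *
          (ENNReal.ofReal ((64*s)^(m+1) * δ^(m+1)) * ENNReal.ofReal (ℓ^(m+1))) :=
          mul_le_mul_right hr _
      _ = ENNReal.ofReal ((64*s)^(m+1) * δ^(m+1)) *
          (ENNReal.ofReal (ℓ^(m+1)) * ∏ j, ((A j).card : ℝ≥0∞)^p) := by ring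
  show (∫⁻ x in Box, ∏ j, (∑ a, tubeFn (lipGraph j (g j a)) W x) ^ p)
      ≤ ENNReal.ofReal ((64*s)^(m+1) * δ^(m+1)) *
        ∫⁻ x in Box, ∏ j, (∑ a, tubeFn (lipGraph j (g j a)) (δ⁻¹*W) x) ^ p
  calc (∫⁻ x in Box, ∏ j, (∑ a, tubeFn (lipGraph j (g j a)) W x) ^ p)
      = ∫⁻ y, (∏ j, (∑ a, tubeFn (lipGraph j (g j a)) W (e.symm y)) ^ p) ∂(Measure.pi μ) :=
        transfer _ (hmeasF W)
    _ ≤ ∫⁻ y, (∏ j, (G j y) ^ p) ∂(Measure.pi μ) := by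
        apply lintegral_mono_ae
        filter_upwards [haeBox] with y hy
        have hy' : ∀ i, y i ∈ I i := by
          rw [hpiBox_def, Set.mem_univ_pi] at hy; exact hy
        apply Finset.prod_le_prod'
        intro j _
        exact ENNReal.rpow_le_rpow (C2 j y hy') hp₀
    _ = (∫⋯∫⁻_Finset.univ, (fun y => ∏ j, (G j y) ^ p) ∂μ) u := by rw [lmarginal_univ]
    _ ≤ ∏ j, ((∫⋯∫⁻_(Finset.univ \ {j}), G j ∂μ) u) ^ p := hLW
    _ ≤ ∏ j, (((A j).card : ℝ≥0∞) * (ENNReal.ofReal (4*W))^m)^p := by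
        apply Finset.prod_le_prod'
        intro j _
        exact ENNReal.rpow_le_rpow (margbd j) hp₀
    _ ≤ ENNReal.ofReal ((64*s)^(m+1) * δ^(m+1)) *
        (ENNReal.ofReal (ℓ^(m+1)) * ∏ j, ((A j).card : ℝ≥0∞)^p) := hfin
    _ ≤ ENNReal.ofReal ((64*s)^(m+1) * δ^(m+1)) *
        ∫⁻ y, (∏ j, (∑ a, tubeFn (lipGraph j (g j a)) (δ⁻¹*W) (e.symm y)) ^ p)
          ∂(Measure.pi μ) := mul_le_mul_right rhslow _
    _ = ENNReal.ofReal ((64*s)^(m+1) * δ^(m+1)) *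
        ∫⁻ x in Box, ∏ j, (∑ a, tubeFn (lipGraph j (g j a)) (δ⁻¹*W) x) ^ p := by
        rw [← transfer _ (hmeasF (δ⁻¹*W))]

theorem mem_subintervals {a ℓ t : ℝ} (hℓ : 0 < ℓ) (Kn : ℕ)
    (h : t ∈ Set.Ico a (a + (Kn : ℝ) * ℓ)) :
    ∃ k : Fin Kn, t ∈ Set.Ico (a + ((k : ℕ) : ℝ) * ℓ) (a + (((k : ℕ) : ℝ) + 1) * ℓ) := by
  rw [Set.mem_Ico] at h
  have h0 : 0 ≤ (t - a) / ℓ := div_nonneg (by linarith) hℓ.le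
  have hlt : (t - a) / ℓ < (Kn : ℝ) := by
    rw [div_lt_iff₀ hℓ]
    nlinarith
  have hk : ⌊(t - a) / ℓ⌋₊ < Kn := by
    rw [Nat.floor_lt h0]
    exact hlt
  refine ⟨⟨⌊(t - a) / ℓ⌋₊, hk⟩, ?_⟩
  have h1 : (⌊(t - a) / ℓ⌋₊ : ℝ) ≤ (t - a) / ℓ := Nat.floor_le h0
  have h2 : (t - a) / ℓ < ⌊(t - a) / ℓ⌋₊ + 1 := Nat.lt_floor_add_one _
  simp only [Fin.val_mk, Set.mem_Ico]
  constructor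
  · nlinarith [(le_div_iff₀ hℓ).mp h1]
  · rw [div_lt_iff₀ hℓ] at h2
    nlinarith
  
theorem subintervals_disj {a ℓ : ℝ} (hℓ : 0 < ℓ) {k k' : ℕ} (hkk : k ≠ k') {t : ℝ}
    (h1 : t ∈ Set.Ico (a + (k : ℝ) * ℓ) (a + (k : ℝ) * ℓ + ℓ))
    (h2 : t ∈ Set.Ico (a + (k' : ℝ) * ℓ) (a + (k' : ℝ) * ℓ + ℓ)) : False := by
  rw [Set.mem_Ico] at h1 h2
  rcases Nat.lt_or_ge k k' with hlt | hge
  · have hc : (k : ℝ) + 1 ≤ (k' : ℝ) := by exact_mod_cast hlt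
    nlinarith [h1.2, h2.1]
  · have hlt' : k' < k := lt_of_le_of_ne hge (Ne.symm hkk)
    have hc : (k' : ℝ) + 1 ≤ (k : ℝ) := by exact_mod_cast hlt'
    nlinarith [h2.2, h1.1]

theorem volume_hyperplane {n : ℕ} (i : Fin n) (r : ℝ) :
    volume {x : EuclideanSpace ℝ (Fin n) | x i = r} = 0 := by
  have hmeas : MeasurableSet {x : EuclideanSpace ℝ (Fin n) | x i = r} := by
    have : {x : EuclideanSpace ℝ (Fin n) | x i = r}
        = (fun x : EuclideanSpace ℝ (Fin n) => x i) ⁻¹' {r} := rfl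
    rw [this]
    exact ((measurable_pi_apply i).comp (WithLp.measurable_ofLp 2 _)) (measurableSet_singleton r)
  have h1 : (volume : Measure (EuclideanSpace ℝ (Fin n)))
      = Measure.map (MeasurableEquiv.toLp 2 (Fin n → ℝ)).symm.symm volume :=
    ((EuclideanSpace.volume_preserving_symm_measurableEquiv_toLp _).symm).map_eq.symm
  rw [h1, Measure.map_apply (MeasurableEquiv.measurable _) hmeas]
  have h2 : (MeasurableEquiv.toLp 2 (Fin n → ℝ)).symm.symm ⁻¹' {x | x i = r}
      = {y : Fin n → ℝ | y i = r} := rfl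
  rw [h2, volume_pi]
  exact Measure.pi_hyperplane (fun _ => (volume : Measure ℝ)) i r

end SSL


open SSL in
set_option maxHeartbeats 1000000 in
/-- Scale-step lemma for Lipschitz curves: there is `C_n` such that for `0 < δ ≤ 1/2`,
`W > 0`, and graphs `γ_{j,a}` over the `x_j`-axis of `δ`-Lipschitz functions
`g_{j,a} : ℝ → ℝ^{n-1}`, for any cube of side `S ≥ δ⁻¹ W`,
`∫_{Q_S} ∏_j f_{j,W}^{1/(n-1)} ≤ C_n δⁿ ∫_{Q_S} ∏_j f_{j,δ⁻¹W}^{1/(n-1)}`. -/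
theorem scale_step_lipschitz (n : ℕ) (hn : 2 ≤ n) :
    ∃ C : ℝ, 0 < C ∧
      ∀ (δ W : ℝ), 0 < δ → δ ≤ 1 / 2 → 0 < W →
      ∀ (N : Fin n → ℕ) (g : (j : Fin n) → Fin (N j) → ℝ → EuclideanSpace ℝ (Fin (n - 1))),
        (∀ j a (s t : ℝ), ‖g j a s - g j a t‖ ≤ δ * |s - t|) →
        ∀ S : ℝ, δ⁻¹ * W ≤ S → ∀ c : EuclideanSpace ℝ (Fin n),
          ∫⁻ x in cube c S,
              ∏ j : Fin n, (∑ a : Fin (N j),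
                tubeFn (lipGraph j (g j a)) W x) ^ ((1 : ℝ) / ((n : ℝ) - 1))
            ≤ ENNReal.ofReal (C * δ ^ n) *
                ∫⁻ x in cube c S,
                  ∏ j : Fin n, (∑ a : Fin (N j),
                    tubeFn (lipGraph j (g j a)) (δ⁻¹ * W) x) ^ ((1 : ℝ) / ((n : ℝ) - 1)) := by
  classical
  obtain ⟨m, rfl⟩ : ∃ m, n = m + 1 := ⟨n - 1, by omega⟩
  have hm : 1 ≤ m := by omega
  have hsq0 : (0:ℝ) < Real.sqrt ((m+1 : ℕ) : ℝ) := by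
    apply Real.sqrt_pos.mpr
    push_cast
    linarith
  have hs1 : (1:ℝ) ≤ Real.sqrt ((m+1 : ℕ) : ℝ) := by
    rw [show (1:ℝ) = Real.sqrt 1 by simp]
    apply Real.sqrt_le_sqrt
    push_cast
    linarith
  refine ⟨(64 * Real.sqrt ((m+1 : ℕ) : ℝ))^(m+1), pow_pos (by linarith) _, ?_⟩
  intro δ W hδ₀ hδ₁ hW N g hg S hS c
  have hS0 : 0 < S := lt_of_lt_of_le (by positivity) hS
  set s : ℝ := Real.sqrt ((m+1 : ℕ) : ℝ) with hs_def
  set L : ℝ := δ⁻¹ * W / (8 * s) with hL_def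
  have hL0 : 0 < L := by
    rw [hL_def]
    positivity
  have hLS : L ≤ S := by
    have h1 : L ≤ δ⁻¹ * W := by
      rw [hL_def]
      apply div_le_self (by positivity)
      linarith
    linarith
  set Kn : ℕ := ⌈S / L⌉₊ with hK_def
  have hK0 : 0 < Kn := Nat.ceil_pos.mpr (by positivity)
  have hKc : (0:ℝ) < (Kn : ℝ) := by exact_mod_cast hK0
  set ℓ : ℝ := S / Kn with hℓ_def
  have hℓ0 : 0 < ℓ := by rw [hℓ_def]; positivity
  have hKℓ : (Kn : ℝ) * ℓ = S := by
    rw [hℓ_def]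
    field_simp
  have hℓL : ℓ ≤ L := by
    have h := Nat.le_ceil (S / L)
    rw [← hK_def] at h
    rw [div_le_iff₀ hL0] at h
    rw [hℓ_def, div_le_iff₀ hKc]
    nlinarith
  have hL2ℓ : L ≤ 2 * ℓ := by
    have h1 : (Kn : ℝ) ≤ S / L + 1 := by
      have h := Nat.ceil_lt_add_one (by positivity : (0:ℝ) ≤ S / L)
      rw [← hK_def] at h
      linarith
    have h2 : 1 ≤ S / L := (one_le_div hL0).mpr hLS
    have h3 : (Kn : ℝ) ≤ 2 * (S / L) := by linarith
    have h4 : (Kn : ℝ) * L ≤ 2 * S := by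
      have h5 : (S / L) * L = S := div_mul_cancel₀ S hL0.ne'
      nlinarith
    have h6 : (S / (Kn:ℝ)) * (Kn:ℝ) = S := div_mul_cancel₀ S hKc.ne'
    rw [hℓ_def]
    nlinarith
  have h8s : 8 * s * ℓ ≤ δ⁻¹ * W := by
    have h1 : 8 * s * L = δ⁻¹ * W := by
      rw [hL_def]
      field_simp
    nlinarith
  have h16s : δ⁻¹ * W ≤ 16 * s * ℓ := by
    have h1 : 8 * s * L = δ⁻¹ * W := by
      rw [hL_def]
      field_simp
    nlinarith
  -- the boxes
  set Bx : (Fin (m+1) → Fin Kn) → Set (EuclideanSpace ℝ (Fin (m+1))) := fun b =>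
    {x | ∀ i, x i ∈ Set.Ico (c i + ((b i : ℕ) : ℝ) * ℓ) (c i + ((b i : ℕ) : ℝ) * ℓ + ℓ)}
    with hBx_def
  have hBxMeas : ∀ b, MeasurableSet (Bx b) := by
    intro b
    have : Bx b = ⋂ i, (fun x : EuclideanSpace ℝ (Fin (m+1)) => x i) ⁻¹'
        (Set.Ico (c i + ((b i : ℕ) : ℝ) * ℓ) (c i + ((b i : ℕ) : ℝ) * ℓ + ℓ)) := by
      ext x
      simp [hBx_def, Set.mem_iInter]
    rw [this]
    exact MeasurableSet.iInter fun i => ((measurable_pi_apply i).comp (WithLp.measurable_ofLp 2 _)) measurableSet_Ico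
  have hBxsub : ∀ b, Bx b ⊆ cube c S := by
    intro b x hx i
    have h := hx i
    rw [Set.mem_Ico] at h
    have hb1 : ((b i : ℕ) : ℝ) + 1 ≤ (Kn : ℝ) := by exact_mod_cast (b i).isLt
    have hb0 : (0:ℝ) ≤ ((b i : ℕ) : ℝ) := by positivity
    rw [Set.mem_Icc]
    constructor
    · nlinarith [h.1]
    · nlinarith [h.2]
  have hdisj : Pairwise (Function.onFun Disjoint Bx) := by
    intro b b' hne
    obtain ⟨i, hi⟩ := Function.ne_iff.mp hne
    rw [Function.onFun, Set.disjoint_left]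
    intro x hx hx'
    exact subintervals_disj hℓ0 (fun h => hi (Fin.ext h)) (hx i) (hx' i)
  have hZ : volume (⋃ i, {x : EuclideanSpace ℝ (Fin (m+1)) | x i = c i + S}) = 0 :=
    measure_iUnion_null fun i => volume_hyperplane i _
  have hcubesub : cube c S ⊆ (⋃ b, Bx b) ∪
      (⋃ i, {x : EuclideanSpace ℝ (Fin (m+1)) | x i = c i + S}) := by
    intro x hx
    by_cases hall : ∀ i, x i < c i + S
    · left
      have hmem : ∀ i, x i ∈ Set.Ico (c i) (c i + (Kn : ℝ) * ℓ) := by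
        intro i
        rw [Set.mem_Ico, hKℓ]
        exact ⟨(hx i).1, hall i⟩
      have hch : ∀ i, ∃ k : Fin Kn,
          x i ∈ Set.Ico (c i + ((k : ℕ) : ℝ) * ℓ) (c i + (((k : ℕ) : ℝ) + 1) * ℓ) :=
        fun i => mem_subintervals hℓ0 Kn (hmem i)
      choose b hb using hch
      refine Set.mem_iUnion.mpr ⟨b, fun i => ?_⟩
      have h := hb i
      rw [Set.mem_Ico] at h ⊢
      exact ⟨h.1, by nlinarith [h.2]⟩
    · right
      push_neg at hall
      obtain ⟨i, hi⟩ := hall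
      exact Set.mem_iUnion.mpr ⟨i, le_antisymm (hx i).2 hi⟩
  have hmeasF : ∀ W' : ℝ, Measurable fun x : EuclideanSpace ℝ (Fin (m+1)) =>
      ∏ j, (∑ a, tubeFn (lipGraph j (g j a)) W' x) ^ ((1:ℝ)/(((m+1:ℕ) : ℝ) - 1)) := by
    intro W'
    exact Finset.measurable_prod _ fun j _ =>
      (Finset.measurable_sum _ fun a _ => measurable_tubeFn _ _).pow_const _
  calc ∫⁻ x in cube c S,
        ∏ j, (∑ a, tubeFn (lipGraph j (g j a)) W x) ^ ((1:ℝ)/(((m+1:ℕ) : ℝ) - 1))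
      ≤ ∫⁻ x in (⋃ b, Bx b) ∪ (⋃ i, {x : EuclideanSpace ℝ (Fin (m+1)) | x i = c i + S}),
        ∏ j, (∑ a, tubeFn (lipGraph j (g j a)) W x) ^ ((1:ℝ)/(((m+1:ℕ) : ℝ) - 1)) :=
        lintegral_mono_set hcubesub
    _ ≤ (∫⁻ x in ⋃ b, Bx b,
          ∏ j, (∑ a, tubeFn (lipGraph j (g j a)) W x) ^ ((1:ℝ)/(((m+1:ℕ) : ℝ) - 1)))
        + ∫⁻ x in ⋃ i, {x : EuclideanSpace ℝ (Fin (m+1)) | x i = c i + S},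
          ∏ j, (∑ a, tubeFn (lipGraph j (g j a)) W x) ^ ((1:ℝ)/(((m+1:ℕ) : ℝ) - 1)) :=
        lintegral_union_le _ _ _
    _ = ∫⁻ x in ⋃ b, Bx b,
          ∏ j, (∑ a, tubeFn (lipGraph j (g j a)) W x) ^ ((1:ℝ)/(((m+1:ℕ) : ℝ) - 1)) := by
        rw [setLIntegral_measure_zero _ _ hZ, add_zero]
    _ = ∑ b : Fin (m+1) → Fin Kn, ∫⁻ x in Bx b,
          ∏ j, (∑ a, tubeFn (lipGraph j (g j a)) W x) ^ ((1:ℝ)/(((m+1:ℕ) : ℝ) - 1)) := by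
        rw [lintegral_iUnion hBxMeas hdisj, tsum_fintype]
    _ ≤ ∑ b : Fin (m+1) → Fin Kn,
          ENNReal.ofReal ((64 * s)^(m+1) * δ^(m+1)) * ∫⁻ x in Bx b,
          ∏ j, (∑ a, tubeFn (lipGraph j (g j a)) (δ⁻¹ * W) x)
            ^ ((1:ℝ)/(((m+1:ℕ) : ℝ) - 1)) := by
        apply Finset.sum_le_sum
        intro b _
        exact box_step hm hδ₀ hδ₁ hW hℓ0 h8s h16s N g hg
          (fun i => c i + ((b i : ℕ) : ℝ) * ℓ)
    _ = ENNReal.ofReal ((64 * s)^(m+1) * δ^(m+1)) *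
        ∑ b : Fin (m+1) → Fin Kn, ∫⁻ x in Bx b,
          ∏ j, (∑ a, tubeFn (lipGraph j (g j a)) (δ⁻¹ * W) x)
            ^ ((1:ℝ)/(((m+1:ℕ) : ℝ) - 1)) := by
        rw [← Finset.mul_sum]
    _ = ENNReal.ofReal ((64 * s)^(m+1) * δ^(m+1)) *
        ∫⁻ x in ⋃ b, Bx b,
          ∏ j, (∑ a, tubeFn (lipGraph j (g j a)) (δ⁻¹ * W) x)
            ^ ((1:ℝ)/(((m+1:ℕ) : ℝ) - 1)) := by
        rw [lintegral_iUnion hBxMeas hdisj, tsum_fintype]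
    _ ≤ ENNReal.ofReal ((64 * s)^(m+1) * δ^(m+1)) *
        ∫⁻ x in cube c S,
          ∏ j, (∑ a, tubeFn (lipGraph j (g j a)) (δ⁻¹ * W) x)
            ^ ((1:ℝ)/(((m+1:ℕ) : ℝ) - 1)) :=
        mul_le_mul_right (lintegral_mono_set (Set.iUnion_subset hBxsub)) _
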